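/- Let X be a finite set of n points on the unit sphere in ℝ³ such that all pairwise Euclidean distances exceed 1 (equivalently, all pairwise angular distances exceed π/3). Then n ≤ 13. In particular, there do not exist 14 rays in ℝ³ from a common origin with pairwise angles all greater than π/3. -/

import Mathlib

set_option maxHeartbeats 2000000

noncomputable def muv : Fin 35 → ℝ := ![((31500 : ℝ)/34607), ((31500 : ℝ)/34607), ((31500 : ℝ)/34607), ((5250 : ℝ)/90589), ((2250 : ℝ)/34645034442673), ((1781250 : ℝ)/382441957), ((374062500 : ℝ)/1091954671), ((374062500 : ℝ)/1091954671), ((374062500 : ℝ)/1091954671), ((10660407187500 : ℝ)/31553), ((10660407187500 : ℝ)/31553), ((10660407187500 : ℝ)/31553), ((888367265625 : ℝ)/69214), ((2665101796875 : ℝ)/69214), ((252 : ℝ)/6598577), ((252 : ℝ)/6598577), ((252 : ℝ)/6598577), ((22500 : ℝ)/277), ((70312500 : ℝ)/1282787), ((5299875000000 : ℝ)/4631), ((39375 : ℝ)/41236064620440304), ((39375 : ℝ)/41236064620440304), ((39375 : ℝ)/41236064620440304), ((3125 : ℝ)/469392323692979713456), ((3125 : ℝ)/469392323692979713456), ((3125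 : ℝ)/469392323692979713456), ((3906250 : ℝ)/53299690811798395038383), ((3906250 : ℝ)/53299690811798395038383), ((3906250 : ℝ)/53299690811798395038383), ((5257812500 : ℝ)/18016848482569123719), ((5257812500 : ℝ)/18016848482569123719), ((5257812500 : ℝ)/18016848482569123719), ((1874364939062500 : ℝ)/25390029), ((1874364939062500 : ℝ)/25390029), ((1874364939062500 : ℝ)/25390029)]
noncomputable def gv : Fin 35 → EuclideanSpace ℝ (Fin 3) → ℝ := ![fun v => (34607) * v 0^1 * v 1^1 * v 2^2 + (-1018) * v 0^1 * v 1^3 + (-1018) * v 0^3 * v 1^1, fun v => (-1018) * v 0^1 * v 2^3 + (34607) * v 0^1 * v 1^2 * v 2^1 + (-1018) * v 0^3 * v 2^1, fun v => (-1018) * v 1^1 * v 2^3 + (-1018) * v 1^3 * v 2^1 + (34607) * v 0^2 * v 1^1 * v 2^1, fun v => (-8143) * v 2^4 + (-13232) * v 1^2 * v 2^2 + (-5089) * v 1^4 + (90589) * v 0^2 * v 2^2 + (-13232) * v 0^2 * v 1^2 + (-8143) * v 0^4, fun v => (-281804801) * v 2^4 + (2677093699) * v 1^2 * v 2^2 +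 (-268334625) * v 1^4 + (-457919824) * v 0^2 * v 1^2 + (-189585199) * v 0^4, fun v => (-28499) * v 2^4 + (-37661) * v 1^4 + (311463) * v 0^2 * v 1^2 + (-37661) * v 0^4, fun v => (31553) * v 1^1 * v 2^3 + (-3054) * v 1^3 * v 2^1, fun v => (31553) * v 0^1 * v 1^3 + (-3054) * v 0^3 * v 1^1, fun v => (31553) * v 0^1 * v 2^3 + (-3054) * v 0^3 * v 2^1, fun v => (1) * v 1^3 * v 2^1, fun v => (1) * v 0^3 * v 2^1, fun v => (1) * v 0^3 * v 1^1, fun v => (-1) * v 2^4 + (2) * v 1^4 + (-1) * v 0^4, fun v => (1) * v 2^4 + (-1) * v 0^4, fun v => (369601) * v 0^1 * v 2^4 + (6598577) * v 0^1 * v 1^2 * v 2^2 + (369601) * v 0^1 * v 1^4 + (268577) * v 0^3 * v 2^2 + (268577) * v 0^3 * v 1^2 + (-101024) * v 0^5, fun v => (369601) * v 1^1 * v 2^4 + (268577) * v 1^3 * v 2^2 + (-101024) * v 1^5 + (6598577) * v 0^2 * v 1^1 * v 2^2 + (268577) * v 0^2 * v 1^3 + (369601) * v 0^4 * v 1^1,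 fun v => (-101024) * v 2^5 + (268577) * v 1^2 * v 2^3 + (369601) * v 1^4 * v 2^1 + (268577) * v 0^2 * v 2^3 + (6598577) * v 0^2 * v 1^2 * v 2^1 + (369601) * v 0^4 * v 2^1, fun v => (3878) * v 0^1 * v 1^1 * v 2^3 + (753) * v 0^1 * v 1^3 * v 2^1 + (753) * v 0^3 * v 1^1 * v 2^1, fun v => (4631) * v 0^1 * v 1^3 * v 2^1 + (753) * v 0^3 * v 1^1 * v 2^1, fun v => (1) * v 0^3 * v 1^1 * v 2^1, fun v => (3743318928) * v 1^1 * v 2^4 + (24996943808) * v 1^3 * v 2^2 + (633071755) * v 1^5 + (-592337798) * v 0^2 * v 1^3 + (-1225409553) * v 0^4 * v 1^1, fun v => (633071755) * v 2^5 + (-592337798) * v 1^2 * v 2^3 + (-1225409553) * v 1^4 * v 2^1 + (24996943808) * v 0^2 * v 2^3 + (3743318928) * v 0^4 * v 2^1, fun v => (3743318928) * v 0^1 * v 2^4 + (-1225409553) * v 0^1 * v 1^4 + (24996943808) * v 0^3 * v 2^2 + (-592337798) * v 0^3 * v 1^2 + (633071755) * v 0^5, fun v => (245505226589) * v 2^5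 + (9464106210678) * v 1^2 * v 2^3 + (1407056044089) * v 1^4 * v 2^1 + (-430610788464) * v 0^4 * v 2^1, fun v => (-430610788464) * v 1^1 * v 2^4 + (245505226589) * v 1^5 + (9464106210678) * v 0^2 * v 1^3 + (1407056044089) * v 0^4 * v 1^1, fun v => (-430610788464) * v 0^1 * v 2^4 + (1407056044089) * v 0^1 * v 1^4 + (9464106210678) * v 0^3 * v 1^2 + (245505226589) * v 0^5, fun v => (2128809913833) * v 1^1 * v 2^4 + (-82440197357) * v 1^5 + (-61096732131) * v 0^4 * v 1^1, fun v => (-82440197357) * v 2^5 + (2128809913833) * v 1^4 * v 2^1 + (-61096732131) * v 0^4 * v 2^1, fun v => (-61096732131) * v 0^1 * v 2^4 + (2128809913833) * v 0^1 * v 1^4 + (-82440197357) * v 0^5, fun v => (1066381218) * v 0^1 * v 2^4 + (-42516863) * v 0^5, fun v => (-42516863) * v 2^5 + (1066381218) * v 0^4 * v 2^1, fun v => (-42516863) * v 1^5 + (1066381218) * v 0^4 * v 1^1, fun v => (1) * v 1^5, fun v => (1) * v 2^5, fun v => (1) * v 0^5]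

lemma sum_sos {α : Type*} (X : Finset α) {ι : Type*} [Fintype ι] (μ : ι → ℝ) (g : ι → α → ℝ)
    (hμ : ∀ j, 0 ≤ μ j) (c0 : ℝ) :
    c0 * (X.card : ℝ)^2 ≤ ∑ x ∈ X, ∑ y ∈ X, (c0 + ∑ j, μ j * (g j x * g j y)) := by
  have h2 : ∑ x ∈ X, ∑ y ∈ X, ∑ j, μ j * (g j x * g j y)
      = ∑ j, μ j * (∑ x ∈ X, g j x)^2 := by
    have e1 : ∀ x ∈ X, ∑ y ∈ X, ∑ j, μ j * (g j x * g j y)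
        = ∑ j, μ j * (g j x * ∑ y ∈ X, g j y) := by
      intro x _
      rw [Finset.sum_comm]
      exact Finset.sum_congr rfl fun j _ => by rw [← Finset.mul_sum, ← Finset.mul_sum]
    rw [Finset.sum_congr rfl e1, Finset.sum_comm]
    refine Finset.sum_congr rfl fun j _ => ?_
    rw [← Finset.mul_sum]
    congr 1
    rw [sq, Finset.sum_mul]
  have h1 : ∑ x ∈ X, ∑ y ∈ X, (c0 + ∑ j, μ j * (g j x * g j y))
      = c0 * (X.card:ℝ)^2 + ∑ j, μ j * (∑ x ∈ X, g j x)^2 := by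
    rw [← h2]
    simp [Finset.sum_add_distrib, Finset.mul_sum]
    ring
  rw [h1]
  have : 0 ≤ ∑ j, μ j * (∑ x ∈ X, g j x)^2 :=
    Finset.sum_nonneg fun j _ => mul_nonneg (hμ j) (sq_nonneg _)
  linarith

lemma mu_nonneg : ∀ j, 0 ≤ muv j := by
  intro j
  fin_cases j <;> norm_num [muv]

lemma norm_coords (x : EuclideanSpace ℝ (Fin 3)) (hx : ‖x‖ = 1) :
    x 0^2 + x 1^2 + x 2^2 = 1 := by
  have h : inner ℝ x x = (1:ℝ) := by rw [real_inner_self_eq_norm_mul_norm, hx]; norm_num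
  rw [PiLp.inner_apply] at h
  simp [Fin.sum_univ_three, RCLike.inner_apply] at h
  nlinarith [h]

lemma point_id (x y : EuclideanSpace ℝ (Fin 3)) (hx : ‖x‖ = 1) (hy : ‖y‖ = 1) :
    63*(2*(inner ℝ x y : ℝ)-1)*(25*(inner ℝ x y : ℝ)+8)^2*(25*(inner ℝ x y : ℝ)+22)^2
      = 11407137 + ∑ j, muv j * (gv j x * gv j y) := by
  have hp := norm_coords x hx
  have hq := norm_coords y hy
  have hs : (inner ℝ x y : ℝ) = x 0*y 0 + x 1*y 1 + x 2*y 2 := by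
    simp [PiLp.inner_apply, Fin.sum_univ_three, RCLike.inner_apply]; ring
  rw [hs]
  simp only [muv, gv, Fin.sum_univ_succ, Fin.sum_univ_zero, Matrix.cons_val_zero,
    Matrix.cons_val_succ, Fin.succ_zero_eq_one]
  linear_combination ((13358625) * (y 0^2+y 1^2+y 2^2)^2 + (13358625) * (x 0^2+x 1^2+x 2^2)^1 * (y 0^2+y 1^2+y 2^2)^2 + (12729024) * (x 0*y 0+x 1*y 1+x 2*y 2)^1 * (y 0^2+y 1^2+y 2^2)^2 + (12729024) * (x 0*y 0+x 1*y 1+x 2*y 2)^1 * (x 0^2+x 1^2+x 2^2)^1 * (y 0^2+y 1^2+y 2^2)^2 + (16033500) * (x 0*y 0+x 1*y 1+x 2*y 2)^2 * (y 0^2+y 1^2+y 2^2)^1 + (-39532500) * (x 0*y 0+x 1*y 1+x 2*y 2)^3 * (y 0^2+y 1^2+y 2^2)^1) * hp + ((13358625) + (13358625) * (y 0^2+y 1^2+y 2^2)^1 + (12729024) * (x 0*y 0+x 1*y 1+x 2*y 2)^1 + (12729024) * (x 0*y 0+x 1*y 1+x 2*y 2)^1 * (y 0^2+y 1^2+y 2^2)^1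 + (16033500) * (x 0*y 0+x 1*y 1+x 2*y 2)^2 + (-39532500) * (x 0*y 0+x 1*y 1+x 2*y 2)^3) * hq

theorem stmt_17 (X : Finset (EuclideanSpace ℝ (Fin 3)))
    (hsphere : ∀ x ∈ X, ‖x‖ = 1)
    (hfar : ∀ x ∈ X, ∀ y ∈ X, x ≠ y → 1 < dist x y) :
    X.card ≤ 13 := by
  classical
  by_contra hlt
  push_neg at hlt
  have h14 : (14 : ℝ) ≤ (X.card : ℝ) := by exact_mod_cast hlt
  set G : EuclideanSpace ℝ (Fin 3) → EuclideanSpace ℝ (Fin 3) → ℝ :=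
    fun x y => 63*(2*(inner ℝ x y : ℝ)-1)*(25*(inner ℝ x y : ℝ)+8)^2*(25*(inner ℝ x y : ℝ)+22)^2 with hG
  have lower : (11407137 : ℝ) * (X.card : ℝ)^2 ≤ ∑ x ∈ X, ∑ y ∈ X, G x y := by
    have := sum_sos X muv gv mu_nonneg 11407137
    refine le_trans this (le_of_eq ?_)
    refine Finset.sum_congr rfl fun x hxX => Finset.sum_congr rfl fun y hyX => ?_
    rw [hG]
    exact (point_id x y (hsphere x hxX) (hsphere y hyX)).symm
  have upper : ∑ x ∈ X, ∑ y ∈ X, G x y ≤ (X.card : ℝ) * 151552863 := by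
    have hrow : ∀ x ∈ X, ∑ y ∈ X, G x y ≤ 151552863 := by
      intro x hxX
      rw [← Finset.add_sum_erase X _ hxX]
      have hdiag : G x x = 151552863 := by
        have h1 : (inner ℝ x x : ℝ) = 1 := by
          rw [real_inner_self_eq_norm_mul_norm, hsphere x hxX]; norm_num
        rw [hG]; simp only [h1]; norm_num
      have hoff : ∑ y ∈ X.erase x, G x y ≤ 0 := by
        refine Finset.sum_nonpos fun y hy => ?_
        obtain ⟨hne, hyX⟩ := Finset.mem_erase.mp hy
        have hd := hfar x hxX y hyX (Ne.symm hne)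
        have hs2 : (inner ℝ x y : ℝ) < 1/2 := by
          have h2 : dist x y ^ 2 = 2 - 2 * inner ℝ x y := by
            rw [dist_eq_norm, norm_sub_sq_real, hsphere x hxX, hsphere y hyX]; ring
          nlinarith [hd, dist_nonneg (x := x) (y := y)]
        rw [hG]
        show 63*(2*(inner ℝ x y : ℝ)-1)*(25*(inner ℝ x y : ℝ)+8)^2*(25*(inner ℝ x y : ℝ)+22)^2 ≤ 0
        have hA : (0:ℝ) ≤ (25*(inner ℝ x y : ℝ)+8)^2*(25*(inner ℝ x y : ℝ)+22)^2 :=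
          mul_nonneg (sq_nonneg _) (sq_nonneg _)
        nlinarith [hA, hs2]
      linarith [hdiag, hoff]
    calc ∑ x ∈ X, ∑ y ∈ X, G x y ≤ ∑ _x ∈ X, (151552863:ℝ) := Finset.sum_le_sum hrow
      _ = (X.card : ℝ) * 151552863 := by rw [Finset.sum_const, nsmul_eq_mul]
  nlinarith [lower, upper, h14]
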